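/- A consequence relation ⊢ on a set L is monotonic, reflexive and transitive if and only if it has a sound and complete intersective pure semantics, i.e. a sound and complete intersective mixed semantics with D_p^λ = D_c^λ for every λ. -/

import Mathlib

universe u v w x

/-- Mixed truth-relation. -/
def Mixed {V : Type*} (Dp Dc : Set V) (γ δ : Set V) : Prop :=
  γ ⊆ Dp → (δ ∩ Dc).Nonempty

def Monotonic {L : Type*} (Cons : Set L → Set L → Prop) : Prop :=
  ∀ ⦃Γ₁ Γ₂ Δ₁ Δ₂ : Set L⦄, Γ₁ ⊆ Γ₂ → Δ₁ ⊆ Δ₂ → Cons Γ₁ Δ₁ → Cons Γ₂ Δ₂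

def ReflRel {L : Type*} (Cons : Set L → Set L → Prop) : Prop :=
  ∀ F : L, Cons {F} {F}

def TransRel {L : Type*} (Cons : Set L → Set L → Prop) : Prop :=
  ∀ Γ Δ : Set L, ¬ Cons Γ Δ →
    ∃ Γ' Δ' : Set L, Γ ⊆ Γ' ∧ Δ ⊆ Δ' ∧ ¬ Cons Γ' Δ' ∧ Γ' ∪ Δ' = Set.univ

def LRPermeable {L : Type*} (Cons : Set L → Set L → Prop) : Prop :=
  ∀ Γ Δ S : Set L, Cons (Γ ∪ S) Δ → Cons Γ (S ∪ Δ)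

def RLPermeable {L : Type*} (Cons : Set L → Set L → Prop) : Prop :=
  ∀ Γ Δ S : Set L, Cons Γ (S ∪ Δ) → Cons (Γ ∪ S) Δ

def Permeable {L : Type*} (Cons : Set L → Set L → Prop) : Prop :=
  LRPermeable Cons ∨ RLPermeable Cons

def CompactRel {L : Type*} (Cons : Set L → Set L → Prop) : Prop :=
  ∀ Γ Δ : Set L, Cons Γ Δ →
    ∃ Γ' Δ' : Set L, Γ' ⊆ Γ ∧ Δ' ⊆ Δ ∧ Γ'.Finite ∧ Δ'.Finite ∧ Cons Γ' Δ'

/-- Sound and complete intersective mixed semantics. -/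
def IsIMS {L V W Λ : Type*} (Cons : Set L → Set L → Prop)
    (interp : L → W → V) (Dp Dc : Λ → Set V) : Prop :=
  ∀ Γ Δ : Set L, Cons Γ Δ ↔
    ∀ (w : W) (l : Λ), Mixed (Dp l) (Dc l)
      ((fun F => interp F w) '' Γ) ((fun F => interp F w) '' Δ)

/-- Sound and complete mixed semantics (single pair). -/
def IsMixedSem {L V W : Type*} (Cons : Set L → Set L → Prop)
    (interp : L → W → V) (Dp Dc : Set V) : Prop :=
  ∀ Γ Δ : Set L, Cons Γ Δ ↔
    ∀ w : W, Mixed Dp Dc ((fun F => interp F w) '' Γ) ((fun F => interp F w) '' Δ)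

/-- Formulae of a sentential language. -/
inductive Formula (A : Type u) (C : Type u) (ar : C → ℕ) : Type u
  | atom : A → Formula A C ar
  | conn : (c : C) → (Fin (ar c) → Formula A C ar) → Formula A C ar

/-- Substitution induced by a map from atoms to formulae. -/
def Formula.subst {A C : Type u} {ar : C → ℕ} (σ : A → Formula A C ar) :
    Formula A C ar → Formula A C ar
  | .atom a => σ a
  | .conn c Fs => .conn c (fun i => (Fs i).subst σ)

def SubstInvariant {A C : Type u} {ar : C → ℕ}
    (Cons : Set (Formula A C ar) → Set (Formula A C ar) → Prop) : Prop :=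
  ∀ (σ : A → Formula A C ar) (Γ Δ : Set (Formula A C ar)),
    Cons Γ Δ → Cons (Formula.subst σ '' Γ) (Formula.subst σ '' Δ)

/-- Evaluation of formulae from truth-functions and a valuation. -/
def evalF {A C : Type u} {ar : C → ℕ} {V : Type v}
    (tf : (c : C) → (Fin (ar c) → V) → V) (v : A → V) : Formula A C ar → V
  | .atom a => v a
  | .conn c Fs => tf c (fun i => evalF tf v (Fs i))

/-- Truth-functionality of an interpretation w.r.t. truth-functions. -/
def Compositional {A C : Type u} {ar : C → ℕ} {V : Type v} {W : Type w}
    (interp : Formula A C ar → W → V)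
    (tf : (c : C) → (Fin (ar c) → V) → V) : Prop :=
  ∀ (c : C) (Fs : Fin (ar c) → Formula A C ar) (w : W),
    interp (Formula.conn c Fs) w = tf c (fun i => interp (Fs i) w)

/-- Regular connectives. -/
def RegularRel {A C : Type u} {ar : C → ℕ}
    (Cons : Set (Formula A C ar) → Set (Formula A C ar) → Prop) : Prop :=
  ∀ c : C, ∃ Bp Bc : Set (Set (Fin (ar c)) × Set (Fin (ar c))),
    ∀ (Γ Δ : Set (Formula A C ar)) (Fs : Fin (ar c) → Formula A C ar),
      (Cons (Γ ∪ {Formula.conn c Fs}) Δ ↔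
        ∀ B ∈ Bp, Cons (Γ ∪ Fs '' B.1) (Fs '' B.2 ∪ Δ)) ∧
      (Cons Γ ({Formula.conn c Fs} ∪ Δ) ↔
        ∀ B ∈ Bc, Cons (Γ ∪ Fs '' B.1) (Fs '' B.2 ∪ Δ))

/-- monotonicity + reflexivity + transitivity is equivalent to the
existence of a sound and complete intersective pure semantics. -/
theorem statement_9 {L : Type u} (Cons : Set L → Set L → Prop) :
    (Monotonic Cons ∧ ReflRel Cons ∧ TransRel Cons) ↔
      ∃ (V W Λ : Type u) (interp : L → W → V) (Dp Dc : Λ → Set V),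
        (∀ l : Λ, Dp l = Dc l) ∧ IsIMS Cons interp Dp Dc := by
  constructor
  · rintro ⟨hM, hR, hT⟩
    refine ⟨Set PUnit.{u+1},
      {p : Set L × Set L // ¬ Cons p.1 p.2 ∧ p.1 ∪ p.2 = Set.univ},
      PUnit.{u+1}, fun F w => {_x | F ∈ w.1.1},
      fun _ => {s | PUnit.unit ∈ s}, fun _ => {s | PUnit.unit ∈ s},
      fun _ => rfl, ?_⟩
    intro Γ Δ
    constructor
    · intro h w _ hsub
      by_contra hne
      apply w.2.1
      refine hM (Γ₂ := w.1.1) (Δ₂ := w.1.2) ?_ ?_ h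
      · intro F hF
        exact hsub ⟨F, hF, rfl⟩
      · intro G hG
        have hnot : G ∉ w.1.1 := fun hG1 =>
          hne ⟨{_x | G ∈ w.1.1}, ⟨G, hG, rfl⟩, hG1⟩
        have huniv : G ∈ w.1.1 ∪ w.1.2 := by rw [w.2.2]; exact Set.mem_univ G
        exact huniv.resolve_left hnot
    · intro hall
      by_contra h
      obtain ⟨Γ', Δ', hΓ, hΔ, hn, hu⟩ := hT Γ Δ h
      have := hall ⟨(Γ', Δ'), hn, hu⟩ PUnit.unit
      obtain ⟨v, ⟨G, hG, he⟩, hd⟩ := this (by rintro _ ⟨F, hF, rfl⟩; exact hΓ hF)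
      have hG1 : G ∈ Γ' := by
        rw [← he] at hd
        exact hd
      exact hn (hM (Set.singleton_subset_iff.2 hG1)
        (Set.singleton_subset_iff.2 (hΔ hG)) (hR G))
  · rintro ⟨V, W, Λ, interp, Dp, Dc, hDD, hsem⟩
    refine ⟨?_, ?_, ?_⟩
    · intro Γ₁ Γ₂ Δ₁ Δ₂ h12 hd12 h
      rw [hsem] at h ⊢
      intro w l hsub
      obtain ⟨v, hv1, hv2⟩ := h w l
        (fun x hx => hsub (Set.image_mono h12 hx))
      exact ⟨v, Set.image_mono hd12 hv1, hv2⟩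
    · intro F
      rw [hsem]
      intro w l hsub
      refine ⟨interp F w, ⟨F, rfl, rfl⟩, ?_⟩
      rw [← hDD l]
      exact hsub ⟨F, rfl, rfl⟩
    · intro Γ Δ h
      rw [hsem] at h
      push_neg at h
      obtain ⟨w, l, hnm⟩ := h
      unfold Mixed at hnm
      push_neg at hnm
      obtain ⟨hsub, hne⟩ := hnm
      refine ⟨{F | interp F w ∈ Dp l}, {F | interp F w ∉ Dp l},
        fun F hF => hsub ⟨F, hF, rfl⟩, ?_, ?_, ?_⟩
      · intro G hG hmem
        have : ((fun F => interp F w) '' Δ ∩ Dc l).Nonempty :=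
          ⟨interp G w, ⟨G, hG, rfl⟩, by rw [← hDD l]; exact hmem⟩
        rw [hne] at this
        exact this.ne_empty rfl
      · intro hc
        rw [hsem] at hc
        obtain ⟨v, ⟨G, hG, he⟩, hd⟩ := hc w l (by rintro _ ⟨F, hF, rfl⟩; exact hF)
        apply hG
        show interp G w ∈ Dp l
        rw [hDD l]
        show (fun F => interp F w) G ∈ Dc l
        rw [he]
        exact hd
      · ext F
        simp only [Set.mem_union, Set.mem_setOf_eq, Set.mem_univ, iff_true]
        exact em _
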